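/- If A is a block upper-triangular square matrix whose diagonal blocks A_{ii} each satisfy ξᵀA_{ii}ξ ≥ c_i|ξ|² with c_i > 0, then there exists a positive definite diagonal matrix S = diag(σ₁I,...,σ_mI) with σ_i > 0 and a constant η > 0 such that ξᵀ(SA)ξ ≥ η|ξ|² for all ξ. -/

import Mathlib

/-- If `A` is block upper-triangular with diagonal blocks bounded below by
`c_i > 0` times the identity, then there are positive weights `σ_i` (a positive
definite block-diagonal scaling `S`) and `η > 0` such that `SA ≥ η·I` as a
quadratic form. -/
theorem block_upper_triangular_weighted_coercive (m : ℕ) (N : Fin m → ℕ)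
    (A : Matrix ((i : Fin m) × Fin (N i)) ((i : Fin m) × Fin (N i)) ℝ)
    (hupper : ∀ p q : (i : Fin m) × Fin (N i), q.1 < p.1 → A p q = 0)
    (c : Fin m → ℝ) (hc : ∀ i, 0 < c i)
    (hdiag : ∀ (i : Fin m) (ξ : Fin (N i) → ℝ),
      c i * ∑ a, ξ a ^ 2 ≤ ∑ a, ∑ b, ξ a * A ⟨i, a⟩ ⟨i, b⟩ * ξ b) :
    ∃ σ : Fin m → ℝ, (∀ i, 0 < σ i) ∧ ∃ η : ℝ, 0 < η ∧
      ∀ ξ : ((i : Fin m) × Fin (N i)) → ℝ,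
        η * ∑ p, ξ p ^ 2 ≤ ∑ p, ∑ q, ξ p * (σ p.1 * A p q) * ξ q := by
  rcases Nat.eq_zero_or_pos m with hm | hm
  · subst hm
    haveI : IsEmpty ((i : Fin 0) × Fin (N i)) := ⟨fun p => p.1.elim0⟩
    exact ⟨fun _ => 1, fun i => i.elim0, 1, one_pos, fun ξ => by simp⟩
  haveI : NeZero m := ⟨hm.ne'⟩
  have hne : (Finset.univ : Finset (Fin m)).Nonempty := Finset.univ_nonempty
  have hm0 : (0 : ℝ) < m := by exact_mod_cast hm
  -- opaque constants
  obtain ⟨c0, hc0, hc0le⟩ : ∃ c0 : ℝ, 0 < c0 ∧ ∀ i, c0 ≤ c i := by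
    refine ⟨Finset.univ.inf' hne c, (Finset.lt_inf'_iff hne).2 fun i _ => hc i,
      fun i => Finset.inf'_le c (Finset.mem_univ i)⟩
  obtain ⟨M, hM1, hMb⟩ : ∃ M : ℝ, 1 ≤ M ∧ ∀ p q, |A p q| ≤ M := by
    refine ⟨1 + ∑ p, ∑ q, |A p q|, ?_, ?_⟩
    · have : (0:ℝ) ≤ ∑ p, ∑ q, |A p q| :=
        Finset.sum_nonneg fun p _ => Finset.sum_nonneg fun q _ => abs_nonneg _
      linarith
    · intro p q
      have h1 : |A p q| ≤ ∑ q', |A p q'| :=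
        Finset.single_le_sum (f := fun q' => |A p q'|)
          (fun q' _ => abs_nonneg _) (Finset.mem_univ q)
      have h2 : (∑ q', |A p q'|) ≤ ∑ p', ∑ q', |A p' q'| :=
        Finset.single_le_sum (f := fun p' => ∑ q', |A p' q'|)
          (fun p' _ => Finset.sum_nonneg fun q' _ => abs_nonneg _)
          (Finset.mem_univ p)
      linarith
  obtain ⟨n, hn1, hnb⟩ : ∃ n : ℝ, 1 ≤ n ∧ ∀ i, (N i : ℝ) ≤ n := by
    refine ⟨1 + ∑ i : Fin m, (N i : ℝ), ?_, ?_⟩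
    · have : (0:ℝ) ≤ ∑ i : Fin m, (N i : ℝ) :=
        Finset.sum_nonneg fun i _ => Nat.cast_nonneg _
      linarith
    · intro i
      have := Finset.single_le_sum (f := fun i : Fin m => (N i : ℝ))
        (fun j _ => Nat.cast_nonneg _) (Finset.mem_univ i)
      linarith
  have hM0 : 0 < M := by linarith
  have hn0 : 0 < n := by linarith
  obtain ⟨K, hKdef⟩ : ∃ K : ℝ, K = M * n := ⟨_, rfl⟩
  have hK0 : 0 < K := by rw [hKdef]; exact mul_pos hM0 hn0
  have h2mK : (0:ℝ) < 2 * m * K := mul_pos (mul_pos two_pos hm0) hK0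
  have h4m : (0:ℝ) < 4 * m := by linarith
  have hc04m : 0 < c0 / (4 * m) := div_pos hc0 h4m
  obtain ⟨x, hxdef⟩ : ∃ x : ℝ, x = c0 / (2 * m * K) := ⟨_, rfl⟩
  obtain ⟨y, hydef⟩ : ∃ y : ℝ, y = 2 * m * K / c0 := ⟨_, rfl⟩
  have hx : 0 < x := by rw [hxdef]; exact div_pos hc0 h2mK
  have hy : 0 < y := by rw [hydef]; exact div_pos h2mK hc0
  have hxy : x * y = 1 := by
    rw [hxdef, hydef]
    field_simp
  obtain ⟨D, hDdef⟩ : ∃ D : ℝ, D = m * K ^ 2 / c0 := ⟨_, rfl⟩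
  have hD0 : 0 ≤ D := by
    rw [hDdef]
    exact div_nonneg (mul_nonneg hm0.le (sq_nonneg K)) hc0.le
  obtain ⟨t, htdef⟩ : ∃ t : ℝ, t = 1 + 4 * m ^ 2 * K ^ 2 / c0 ^ 2 := ⟨_, rfl⟩
  have ht1 : 1 ≤ t := by
    have h : (0:ℝ) ≤ 4 * m ^ 2 * K ^ 2 / c0 ^ 2 :=
      div_nonneg (by positivity) (sq_nonneg c0)
    rw [htdef]; linarith
  obtain ⟨σ, hσdef⟩ : ∃ σ : Fin m → ℝ, σ = fun i : Fin m => t ^ (i : ℕ) := ⟨_, rfl⟩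
  have hσ1 : ∀ i, 1 ≤ σ i := fun i => by rw [hσdef]; exact one_le_pow₀ ht1
  have hσpos : ∀ i, 0 < σ i := fun i => lt_of_lt_of_le one_pos (hσ1 i)
  -- the key pairwise weight comparison
  have hpair : ∀ i j : Fin m, i < j → D * σ i ≤ c0 / (4 * m) * σ j := by
    intro i j hij
    have hlt : (i : ℕ) < (j : ℕ) := hij
    have h1 : σ i * t ≤ σ j := by
      have h := pow_le_pow_right₀ ht1 (Nat.succ_le_of_lt hlt)
      rw [hσdef]
      calc t ^ (i : ℕ) * t = t ^ ((i : ℕ) + 1) := (pow_succ t (i : ℕ)).symm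
        _ ≤ t ^ (j : ℕ) := h
    have h2 : D ≤ c0 / (4 * m) * t := by
      have e : c0 / (4 * m) * t = c0 / (4 * m) + m * K ^ 2 / c0 := by
        rw [htdef]; field_simp
      rw [hDdef, e]; linarith
    calc D * σ i ≤ (c0 / (4 * m) * t) * σ i :=
          mul_le_mul_of_nonneg_right h2 (hσpos i).le
      _ = c0 / (4 * m) * (σ i * t) := by ring
      _ ≤ c0 / (4 * m) * σ j :=
          mul_le_mul_of_nonneg_left h1 hc04m.le
  -- elementary Young-type bound for a single entry
  have habs : ∀ (u v a : ℝ), |a| ≤ M →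
      -(M / 2 * (x * u ^ 2 + y * v ^ 2)) ≤ u * a * v := by
    intro u v a ha
    have e : |u * a * v| = |a| * (|u| * |v|) := by
      rw [abs_mul, abs_mul]; ring
    have h1' : |a| * (|u| * |v|) ≤ M * (|u| * |v|) :=
      mul_le_mul_of_nonneg_right ha (mul_nonneg (abs_nonneg u) (abs_nonneg v))
    have hneg := neg_abs_le (u * a * v)
    have hsq : 0 ≤ y * (x * |u| - |v|) ^ 2 := mul_nonneg hy.le (sq_nonneg _)
    have e1 : y * (x * |u| - |v|) ^ 2
        = x * |u| ^ 2 * (x * y) - 2 * (x * y) * (|u| * |v|) + y * |v| ^ 2 := by ring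
    rw [hxy] at e1
    have hu := sq_abs u
    have hv := sq_abs v
    have key : 2 * (|u| * |v|) ≤ x * u ^ 2 + y * v ^ 2 := by
      rw [← hu, ← hv]; linarith [e1 ▸ hsq]
    have h2 : M * (|u| * |v|) ≤ M / 2 * (x * u ^ 2 + y * v ^ 2) := by
      have := mul_le_mul_of_nonneg_left key (by linarith : (0:ℝ) ≤ M / 2)
      linarith
    linarith
  refine ⟨σ, hσpos, c0 / 2, half_pos hc0, ?_⟩
  intro ξ
  obtain ⟨s, hsdef⟩ : ∃ s : Fin m → ℝ, s = fun i : Fin m => ∑ a, ξ ⟨i, a⟩ ^ 2 := ⟨_, rfl⟩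
  have hs : ∀ i, 0 ≤ s i := fun i => by
    rw [hsdef]; exact Finset.sum_nonneg fun a _ => sq_nonneg _
  obtain ⟨B, hBdef⟩ : ∃ B : Fin m → Fin m → ℝ,
      B = fun i j => ∑ a, ∑ b, ξ ⟨i, a⟩ * A ⟨i, a⟩ ⟨j, b⟩ * ξ ⟨j, b⟩ := ⟨_, rfl⟩
  -- rewrite the quadratic form blockwise
  have hQ : (∑ p, ∑ q, ξ p * (σ p.1 * A p q) * ξ q) = ∑ i, σ i * ∑ j, B i j := by
    rw [← Finset.univ_sigma_univ]
    simp only [Finset.sum_sigma]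
    refine Finset.sum_congr rfl fun i _ => ?_
    rw [Finset.mul_sum, Finset.sum_comm]
    refine Finset.sum_congr rfl fun j _ => ?_
    rw [hBdef, Finset.mul_sum]
    refine Finset.sum_congr rfl fun a _ => ?_
    rw [Finset.mul_sum]
    refine Finset.sum_congr rfl fun b _ => ?_
    ring
  -- diagonal blocks
  have hdiagB : ∀ i, c0 * s i ≤ B i i := by
    intro i
    have h := hdiag i (fun a => ξ ⟨i, a⟩)
    have h' : c i * s i ≤ B i i := by simpa [hsdef, hBdef] using h
    have : c0 * s i ≤ c i * s i := mul_le_mul_of_nonneg_right (hc0le i) (hs i)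
    linarith
  -- off-diagonal block bound
  have hBij : ∀ i j : Fin m, -(c0 / (4 * m) * s i + D * s j) ≤ B i j := by
    intro i j
    have hterm : ∀ a : Fin (N i), ∀ b : Fin (N j),
        -(M / 2 * (x * ξ ⟨i, a⟩ ^ 2 + y * ξ ⟨j, b⟩ ^ 2))
          ≤ ξ ⟨i, a⟩ * A ⟨i, a⟩ ⟨j, b⟩ * ξ ⟨j, b⟩ :=
      fun a b => habs _ _ _ (hMb _ _)
    have hsum : -(∑ a, ∑ b, M / 2 * (x * ξ ⟨i, a⟩ ^ 2 + y * ξ ⟨j, b⟩ ^ 2)) ≤ B i j := by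
      rw [hBdef, ← Finset.sum_neg_distrib]
      apply Finset.sum_le_sum
      intro a _
      rw [← Finset.sum_neg_distrib]
      exact Finset.sum_le_sum fun b _ => hterm a b
    have hC : (∑ a, ∑ b, M / 2 * (x * ξ ⟨i, a⟩ ^ 2 + y * ξ ⟨j, b⟩ ^ 2))
        = M / 2 * (x * (N j : ℝ) * s i + y * (N i : ℝ) * s j) := by
      have h1 : ∀ a : Fin (N i),
          (∑ b, M / 2 * (x * ξ ⟨i, a⟩ ^ 2 + y * ξ ⟨j, b⟩ ^ 2))
            = (N j : ℝ) * (M / 2 * (x * ξ ⟨i, a⟩ ^ 2)) + M / 2 * (y * s j) := by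
        intro a
        simp only [mul_add, Finset.sum_add_distrib, Finset.sum_const, Finset.card_univ,
          Fintype.card_fin, nsmul_eq_mul, ← Finset.mul_sum]
        simp only [hsdef]
      rw [Finset.sum_congr rfl fun a _ => h1 a]
      simp only [Finset.sum_add_distrib, Finset.sum_const, Finset.card_univ,
        Fintype.card_fin, nsmul_eq_mul, ← Finset.mul_sum]
      simp only [hsdef]
      ring
    have hle : M / 2 * (x * (N j : ℝ) * s i + y * (N i : ℝ) * s j)
        ≤ c0 / (4 * m) * s i + D * s j := by
      have e1 : M / 2 * (x * n) = c0 / (4 * m) := by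
        rw [hxdef, hKdef]; field_simp; ring
      have e2 : M / 2 * (y * n) = D := by
        rw [hydef, hDdef, hKdef]; field_simp
      have b1 : M / 2 * (x * (N j : ℝ)) ≤ M / 2 * (x * n) :=
        mul_le_mul_of_nonneg_left (mul_le_mul_of_nonneg_left (hnb j) hx.le)
          (by linarith)
      have b2 : M / 2 * (y * (N i : ℝ)) ≤ M / 2 * (y * n) :=
        mul_le_mul_of_nonneg_left (mul_le_mul_of_nonneg_left (hnb i) hy.le)
          (by linarith)
      have c1 := mul_le_mul_of_nonneg_right b1 (hs i)
      have c2 := mul_le_mul_of_nonneg_right b2 (hs j)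
      calc M / 2 * (x * (N j : ℝ) * s i + y * (N i : ℝ) * s j)
          = (M / 2 * (x * (N j : ℝ))) * s i + (M / 2 * (y * (N i : ℝ))) * s j := by ring
        _ ≤ (M / 2 * (x * n)) * s i + (M / 2 * (y * n)) * s j := by linarith
        _ = c0 / (4 * m) * s i + D * s j := by rw [e1, e2]
    linarith [hsum, hC.le, hC.ge, hle]
  -- row decomposition
  have hrow : ∀ i, (∑ j, B i j) = B i i + ∑ j ∈ Finset.Ioi i, B i j := by
    intro i
    have hzero : ∀ j : Fin m, ¬ i ≤ j → B i j = 0 := by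
      intro j hj
      rw [hBdef]
      refine Finset.sum_eq_zero fun a _ => Finset.sum_eq_zero fun b _ => ?_
      rw [hupper ⟨i, a⟩ ⟨j, b⟩ (not_le.mp hj)]
      ring
    calc (∑ j, B i j) = ∑ j ∈ Finset.Ici i, B i j :=
          (Finset.sum_subset (Finset.subset_univ _)
            (fun j _ hj => hzero j (by simpa using hj))).symm
      _ = B i i + ∑ j ∈ Finset.Ioi i, B i j := by
          rw [← Finset.Ioi_insert, Finset.sum_insert (by simp)]
  -- per-row lower bound
  have hcard : ∀ S : Finset (Fin m), (S.card : ℝ) ≤ m := by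
    intro S
    exact_mod_cast (Finset.card_le_univ S).trans_eq (Fintype.card_fin m)
  have h2 : ∀ i, c0 * (σ i * s i) - c0 / 4 * (σ i * s i)
      - (∑ j ∈ Finset.Ioi i, D * (σ i * s j)) ≤ σ i * ∑ j, B i j := by
    intro i
    rw [hrow i, mul_add, Finset.mul_sum]
    have hd : c0 * (σ i * s i) ≤ σ i * B i i := by
      calc c0 * (σ i * s i) = σ i * (c0 * s i) := by ring
        _ ≤ σ i * B i i := mul_le_mul_of_nonneg_left (hdiagB i) (hσpos i).le
    have hterm : ∀ j ∈ Finset.Ioi i,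
        -(σ i * (c0 / (4 * m) * s i) + D * (σ i * s j)) ≤ σ i * B i j := by
      intro j _
      calc -(σ i * (c0 / (4 * m) * s i) + D * (σ i * s j))
          = σ i * (-(c0 / (4 * m) * s i + D * s j)) := by ring
        _ ≤ σ i * B i j := mul_le_mul_of_nonneg_left (hBij i j) (hσpos i).le
    have hoff : -(c0 / 4 * (σ i * s i) + ∑ j ∈ Finset.Ioi i, D * (σ i * s j))
        ≤ ∑ j ∈ Finset.Ioi i, σ i * B i j := by
      have hsum1 : (∑ j ∈ Finset.Ioi i, (σ i * (c0 / (4 * m) * s i)))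
          ≤ c0 / 4 * (σ i * s i) := by
        rw [Finset.sum_const, nsmul_eq_mul]
        have hnn : 0 ≤ σ i * (c0 / (4 * m) * s i) :=
          mul_nonneg (hσpos i).le (mul_nonneg hc04m.le (hs i))
        have hle := mul_le_mul_of_nonneg_right (hcard (Finset.Ioi i)) hnn
        have heq : (m : ℝ) * (σ i * (c0 / (4 * m) * s i)) = c0 / 4 * (σ i * s i) := by
          field_simp
        linarith
      have e : -((∑ j ∈ Finset.Ioi i, (σ i * (c0 / (4 * m) * s i)))
          + ∑ j ∈ Finset.Ioi i, D * (σ i * s j))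
          = ∑ j ∈ Finset.Ioi i, -(σ i * (c0 / (4 * m) * s i) + D * (σ i * s j)) := by
        rw [← Finset.sum_add_distrib, Finset.sum_neg_distrib]
      have h3 := Finset.sum_le_sum hterm
      rw [← e] at h3
      linarith
    linarith
  have h3 := Finset.sum_le_sum fun i (_ : i ∈ Finset.univ) => h2 i
  rw [Finset.sum_sub_distrib, Finset.sum_sub_distrib] at h3
  -- swap the double sum and bound it
  have hswap : (∑ i, ∑ j ∈ Finset.Ioi i, D * (σ i * s j))
      = ∑ j, ∑ i ∈ Finset.Iio j, D * (σ i * s j) := by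
    apply Finset.sum_comm'
    intro a b
    simp [and_comm]
  have hswapbound : (∑ j, ∑ i ∈ Finset.Iio j, D * (σ i * s j))
      ≤ ∑ j, c0 / 4 * (σ j * s j) := by
    apply Finset.sum_le_sum
    intro j _
    have hterm : ∀ i ∈ Finset.Iio j, D * (σ i * s j) ≤ c0 / (4 * m) * σ j * s j := by
      intro i hi
      have hij : i < j := Finset.mem_Iio.mp hi
      calc D * (σ i * s j) = (D * σ i) * s j := by ring
        _ ≤ (c0 / (4 * m) * σ j) * s j :=
            mul_le_mul_of_nonneg_right (hpair i j hij) (hs j)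
        _ = c0 / (4 * m) * σ j * s j := by ring
    have hnn : 0 ≤ c0 / (4 * m) * σ j * s j :=
      mul_nonneg (mul_nonneg hc04m.le (hσpos j).le) (hs j)
    calc (∑ i ∈ Finset.Iio j, D * (σ i * s j))
        ≤ ∑ i ∈ Finset.Iio j, c0 / (4 * m) * σ j * s j := Finset.sum_le_sum hterm
      _ = ((Finset.Iio j).card : ℝ) * (c0 / (4 * m) * σ j * s j) := by
          rw [Finset.sum_const, nsmul_eq_mul]
      _ ≤ (m : ℝ) * (c0 / (4 * m) * σ j * s j) :=
          mul_le_mul_of_nonneg_right (hcard _) hnn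
      _ = c0 / 4 * (σ j * s j) := by field_simp
  rw [hswap] at h3
  -- assemble
  have hmain : (∑ i, c0 / 2 * (σ i * s i)) ≤ ∑ i, σ i * ∑ j, B i j := by
    have e : (∑ i, c0 / 2 * (σ i * s i))
        = (∑ i, c0 * (σ i * s i)) - (∑ i, c0 / 4 * (σ i * s i))
          - ∑ i, c0 / 4 * (σ i * s i) := by
      rw [← Finset.sum_sub_distrib, ← Finset.sum_sub_distrib]
      refine Finset.sum_congr rfl fun i _ => by ring
    rw [e]
    linarith [h3, hswapbound]
  calc c0 / 2 * ∑ p, ξ p ^ 2 = ∑ i, c0 / 2 * s i := by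
        rw [← Finset.univ_sigma_univ, Finset.sum_sigma, Finset.mul_sum]
        simp only [hsdef]
    _ ≤ ∑ i, c0 / 2 * (σ i * s i) := by
        apply Finset.sum_le_sum
        intro i _
        have h := mul_le_mul_of_nonneg_right (hσ1 i) (hs i)
        have hc2 : (0:ℝ) ≤ c0 / 2 := by linarith
        have := mul_le_mul_of_nonneg_left h hc2
        calc c0 / 2 * s i = c0 / 2 * (1 * s i) := by ring
          _ ≤ c0 / 2 * (σ i * s i) := this
    _ ≤ ∑ i, σ i * ∑ j, B i j := hmain
    _ = _ := hQ.symm
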